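/- Let X have symmetric density f(x) = |x|^{-3} 1{|x| ≥ 1}, and let φ₂(x) = 2 Lx (1 + LLx·sin²(LLLx)) where L denotes iterated logarithm truncated at e. Then E[X²/(φ₂(|X|)·LL|X|)] < ∞. -/

import Mathlib

open MeasureTheory ProbabilityTheory Filter Set Real
open scoped ProbabilityTheory ENNReal

noncomputable def psi (t : ℝ) : ℝ := Real.exp (Real.exp (Real.exp t))

lemma psi_mono : StrictMono psi := fun a b h => by
  unfold psi; exact exp_lt_exp.2 (exp_lt_exp.2 (exp_lt_exp.2 h))

lemma psi_pos (t : ℝ) : 0 < psi t := exp_pos _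

lemma log_psi (t : ℝ) : Real.log (psi t) = Real.exp (Real.exp t) := log_exp _

lemma loglog_psi (t : ℝ) : Real.log (Real.log (psi t)) = Real.exp t := by
  rw [log_psi, log_exp]

lemma logloglog_psi (t : ℝ) : Real.log (Real.log (Real.log (psi t))) = t := by
  rw [loglog_psi, log_exp]

/-- basic largeness facts for x ≥ psi a with 1 ≤ a -/
lemma exp_le_of_psi {a x : ℝ} (ha : 1 ≤ a) (hx : psi a ≤ x) : Real.exp 1 ≤ x ∧ Real.exp 1 ≤ Real.log x ∧ Real.exp 1 ≤ Real.log (Real.log x) := by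
  have h1 : Real.exp (Real.exp (Real.exp 1)) ≤ x :=
    le_trans (by unfold psi; exact exp_le_exp.2 (exp_le_exp.2 (exp_le_exp.2 ha))) hx
  have he1 : (1:ℝ) ≤ Real.exp 1 := by
    have := Real.add_one_le_exp (1:ℝ); linarith
  have he2 : (1:ℝ) ≤ Real.exp (Real.exp 1) := le_trans he1 (exp_le_exp.2 he1)
  have hx1 : Real.exp 1 ≤ x := le_trans (by simpa using exp_le_exp.2 (le_trans he1 (exp_le_exp.2 he1))) h1
  have hlx : Real.exp (Real.exp 1) ≤ Real.log x := by
    have := Real.log_le_log (exp_pos _) h1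
    rwa [log_exp] at this
  have hllx : Real.exp 1 ≤ Real.log (Real.log x) := by
    have := Real.log_le_log (exp_pos _) hlx
    rwa [log_exp] at this
  exact ⟨hx1, le_trans (exp_le_exp.2 he1) hlx, hllx⟩

lemma psi_eq_of_lll {x : ℝ} (hx : psi 1 ≤ x) : psi (Real.log (Real.log (Real.log x))) = x := by
  obtain ⟨h1, h2, h3⟩ := exp_le_of_psi le_rfl hx
  have hx0 : 0 < x := lt_of_lt_of_le (exp_pos 1) h1
  have hlx0 : 0 < Real.log x := lt_of_lt_of_le (exp_pos 1) h2
  have hllx0 : 0 < Real.log (Real.log x) := lt_of_lt_of_le (exp_pos 1) h3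
  unfold psi
  rw [Real.exp_log hllx0, Real.exp_log hlx0, Real.exp_log hx0]

lemma one_lt_exp_one : (1:ℝ) < Real.exp 1 := by
  have := Real.add_one_le_exp (1:ℝ); linarith

lemma hasDeriv_lll {x : ℝ} (hx : Real.exp 1 ≤ x) (hlx : Real.exp 1 ≤ Real.log x)
    (hllx : (0:ℝ) < Real.log (Real.log x)) :
    HasDerivAt (fun y => Real.log (Real.log (Real.log y)))
      (1 / (x * Real.log x * Real.log (Real.log x))) x := by
  have hx0 : (0:ℝ) < x := lt_of_lt_of_le (exp_pos 1) hx
  have hlx0 : (0:ℝ) < Real.log x := lt_of_lt_of_le (exp_pos 1) hlx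
  have h1 : HasDerivAt Real.log x⁻¹ x := Real.hasDerivAt_log hx0.ne'
  have h2 : HasDerivAt Real.log (Real.log x)⁻¹ (Real.log x) := Real.hasDerivAt_log hlx0.ne'
  have h3 : HasDerivAt Real.log (Real.log (Real.log x))⁻¹ (Real.log (Real.log x)) :=
    Real.hasDerivAt_log hllx.ne'
  have h12 := h2.comp x h1
  have h123 := h3.comp x h12
  convert h123 using 1
  · rfl
  · rfl
  · rfl
  · ring

lemma intK {a b : ℝ} (ha : 1 ≤ a) (hab : a ≤ b) :
    ∫⁻ x in Set.Ioc (psi a) (psi b),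
      ENNReal.ofReal (1 / (x * Real.log x * Real.log (Real.log x))) = ENNReal.ofReal (b - a) := by
  have hpab : psi a ≤ psi b := (psi_mono.le_iff_le).2 hab
  have hmem : ∀ x ∈ Set.uIcc (psi a) (psi b),
      Real.exp 1 ≤ x ∧ Real.exp 1 ≤ Real.log x ∧ Real.exp 1 ≤ Real.log (Real.log x) := by
    intro x hx
    rw [Set.uIcc_of_le hpab] at hx
    exact exp_le_of_psi ha (le_trans le_rfl hx.1)
  have hderiv : ∀ x ∈ Set.uIcc (psi a) (psi b),
      HasDerivAt (fun y => Real.log (Real.log (Real.log y)))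
        (1 / (x * Real.log x * Real.log (Real.log x))) x := by
    intro x hx
    obtain ⟨h1, h2, h3⟩ := hmem x hx
    exact hasDeriv_lll h1 h2 (lt_of_lt_of_le (exp_pos 1) h3)
  have hcont : ContinuousOn (fun x => 1 / (x * Real.log x * Real.log (Real.log x)))
      (Set.uIcc (psi a) (psi b)) := by
    intro x hx
    obtain ⟨h1, h2, h3⟩ := hmem x hx
    have hx0 : (0:ℝ) < x := lt_of_lt_of_le (exp_pos 1) h1
    have hlx0 : (0:ℝ) < Real.log x := lt_of_lt_of_le (exp_pos 1) h2
    have hllx0 : (0:ℝ) < Real.log (Real.log x) := lt_of_lt_of_le (exp_pos 1) h3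
    have hca : ContinuousAt (fun x => 1 / (x * Real.log x * Real.log (Real.log x))) x := by
      have clog : ContinuousAt Real.log x := Real.continuousAt_log hx0.ne'
      have cllog : ContinuousAt (fun y => Real.log (Real.log y)) x :=
        (Real.continuousAt_log hlx0.ne').comp clog
      exact continuousAt_const.div
        ((continuousAt_id.mul clog).mul cllog)
        (by positivity)
    exact hca.continuousWithinAt
  have hii : IntervalIntegrable (fun x => 1 / (x * Real.log x * Real.log (Real.log x)))
      volume (psi a) (psi b) := hcont.intervalIntegrable
  have hint : ∫ x in (psi a)..(psi b), 1 / (x * Real.log x * Real.log (Real.log x)) = b - a := by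
    rw [intervalIntegral.integral_eq_sub_of_hasDerivAt hderiv hii, logloglog_psi, logloglog_psi]
  rw [intervalIntegral.integral_of_le hpab] at hint
  have hio : IntegrableOn (fun x => 1 / (x * Real.log x * Real.log (Real.log x)))
      (Set.Ioc (psi a) (psi b)) volume :=
    (intervalIntegrable_iff_integrableOn_Ioc_of_le hpab).1 hii
  rw [← MeasureTheory.ofReal_integral_eq_lintegral_ofReal hio ?_, hint]
  refine (ae_restrict_iff' measurableSet_Ioc).2 (Filter.Eventually.of_forall fun x hx => ?_)
  obtain ⟨h1, h2, h3⟩ := exp_le_of_psi ha hx.1.le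
  have hx0 : (0:ℝ) < x := lt_of_lt_of_le (exp_pos 1) h1
  have hlx0 : (0:ℝ) < Real.log x := lt_of_lt_of_le (exp_pos 1) h2
  have hllx0 : (0:ℝ) < Real.log (Real.log x) := lt_of_lt_of_le (exp_pos 1) h3
  positivity

noncomputable def Lc (x : ℝ) : ℝ := Real.log (max (Real.exp 1) x)
noncomputable def phic (x : ℝ) : ℝ :=
  2 * Lc x * (1 + Lc (Lc x) * Real.sin (Lc (Lc (Lc x))) ^ 2)
noncomputable def Gf (x : ℝ) : ℝ :=
  if 1 ≤ |x| then 1 / (|x| * phic |x| * Lc (Lc |x|)) else 0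

lemma one_le_Lc (x : ℝ) : 1 ≤ Lc x := by
  have h0 : (0:ℝ) < max (Real.exp 1) x := lt_of_lt_of_le (exp_pos 1) (le_max_left _ _)
  rw [Lc, Real.le_log_iff_exp_le h0]
  simpa using le_max_left (Real.exp 1) x

lemma Lc_eq {x : ℝ} (h : Real.exp 1 ≤ x) : Lc x = Real.log x := by
  rw [Lc, max_eq_right h]

lemma Lc2_eq {x : ℝ} (hx : psi 1 ≤ x) : Lc (Lc x) = Real.log (Real.log x) := by
  obtain ⟨h1, h2, _⟩ := exp_le_of_psi le_rfl hx
  rw [Lc_eq h1, Lc_eq h2]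

lemma Lc3_eq {x : ℝ} (hx : psi 1 ≤ x) :
    Lc (Lc (Lc x)) = Real.log (Real.log (Real.log x)) := by
  obtain ⟨h1, h2, h3⟩ := exp_le_of_psi le_rfl hx
  rw [Lc_eq h1, Lc_eq h2, Lc_eq h3]

lemma two_le_phic (x : ℝ) : 2 ≤ phic x := by
  have h1 := one_le_Lc x
  have h2 := one_le_Lc (Lc x)
  have h3 : 0 ≤ Real.sin (Lc (Lc (Lc x))) ^ 2 := sq_nonneg _
  have h4 : 0 ≤ Lc (Lc x) * Real.sin (Lc (Lc (Lc x))) ^ 2 :=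
    mul_nonneg (by linarith) h3
  have h5 : 0 ≤ Lc x * (Lc (Lc x) * Real.sin (Lc (Lc (Lc x))) ^ 2) :=
    mul_nonneg (by linarith) h4
  rw [phic]; nlinarith

lemma phic_pos (x : ℝ) : 0 < phic x := lt_of_lt_of_le (by norm_num) (two_le_phic x)

lemma phic_eq {x : ℝ} (hx : psi 1 ≤ x) : phic x =
    2 * Real.log x * (1 + Real.log (Real.log x) *
      Real.sin (Real.log (Real.log (Real.log x))) ^ 2) := by
  rw [phic, Lc3_eq hx, Lc2_eq hx, Lc_eq (exp_le_of_psi le_rfl hx).1]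

lemma Lc_cont : Continuous Lc := by
  refine continuous_iff_continuousAt.mpr fun x => ?_
  have h0 : max (Real.exp 1) x ≠ 0 :=
    (lt_of_lt_of_le (exp_pos 1) (le_max_left _ _)).ne'
  exact (Real.continuousAt_log h0).comp ((continuous_const.max continuous_id).continuousAt)

lemma phic_cont : Continuous phic := by
  unfold phic
  exact (continuous_const.mul Lc_cont).mul (continuous_const.add
    ((Lc_cont.comp Lc_cont).mul
      ((Real.continuous_sin.comp (Lc_cont.comp (Lc_cont.comp Lc_cont))).pow 2)))

lemma Gf_meas : Measurable Gf := by
  unfold Gf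
  refine Measurable.ite (measurableSet_le measurable_const continuous_abs.measurable) ?_
    measurable_const
  exact measurable_const.div
    (((continuous_abs.mul (phic_cont.comp continuous_abs)).mul
      (Lc_cont.comp (Lc_cont.comp continuous_abs))).measurable)

lemma Gf_nonneg (x : ℝ) : 0 ≤ Gf x := by
  unfold Gf
  split
  · rename_i h
    have h0 : (0:ℝ) < |x| := lt_of_lt_of_le one_pos h
    have := phic_pos |x|
    have := one_le_Lc (Lc |x|)
    positivity
  · exact le_refl 0

lemma p_meas : Measurable fun x : ℝ =>
    ENNReal.ofReal (1 / (x * Real.log x * Real.log (Real.log x))) :=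
  (measurable_const.div ((measurable_id.mul Real.measurable_log).mul
    (Real.measurable_log.comp Real.measurable_log))).ennreal_ofReal

set_option maxHeartbeats 1000000 in
lemma interval_bound (k : ℕ) :
    ∫⁻ x in Ioc (psi (((k:ℝ)+1)*π - π/2)) (psi (((k:ℝ)+1)*π + π/2)), ENNReal.ofReal (Gf x)
      ≤ ENNReal.ofReal ((π^3/8 + 1) * Real.exp (-(π/3)) ^ k) := by
  have hπ := Real.pi_gt_three
  have hk0 : (0:ℝ) ≤ k := Nat.cast_nonneg k
  set c : ℝ := ((k:ℝ)+1)*π with hc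
  have hc2 : 1 ≤ c - π/2 := by rw [hc]; nlinarith
  set δ : ℝ := Real.exp (-(c - π/2)/3) with hδ
  have hδpos : 0 < δ := exp_pos _
  have hδlt1 : δ < 1 := by rw [hδ, Real.exp_lt_one_iff]; linarith
  have hca : 1 ≤ c - δ := by rw [hc]; nlinarith
  clear_value c δ
  have hsplit : ∫⁻ x in Ioc (psi (c - π/2)) (psi (c + π/2)), ENNReal.ofReal (Gf x) ≤
      (∫⁻ x in Ioc (psi (c - π/2)) (psi (c + π/2)) \ Ioc (psi (c - δ)) (psi (c + δ)),
        ENNReal.ofReal (Gf x)) +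
      ∫⁻ x in Ioc (psi (c - δ)) (psi (c + δ)), ENNReal.ofReal (Gf x) := by
    refine le_trans (lintegral_mono_set fun x hx => ?_) (lintegral_union_le _ _ _)
    by_cases h : x ∈ Ioc (psi (c - δ)) (psi (c + δ))
    · exact Or.inr h
    · exact Or.inl ⟨hx, h⟩
  have hSbound : ∫⁻ x in Ioc (psi (c - δ)) (psi (c + δ)), ENNReal.ofReal (Gf x)
      ≤ ENNReal.ofReal δ := by
    have h1 : ∫⁻ x in Ioc (psi (c - δ)) (psi (c + δ)), ENNReal.ofReal (Gf x)
        ≤ ∫⁻ x in Ioc (psi (c - δ)) (psi (c + δ)),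
            ENNReal.ofReal (2⁻¹ * (1 / (x * Real.log x * Real.log (Real.log x)))) := by
      refine setLIntegral_mono' measurableSet_Ioc fun x hx => ?_
      have hx1 : psi 1 ≤ x := le_trans ((psi_mono.le_iff_le).2 hca) hx.1.le
      obtain ⟨e1, e2, e3⟩ := exp_le_of_psi le_rfl hx1
      have hx0 : (1:ℝ) < x := lt_of_lt_of_le one_lt_exp_one e1
      have hlx : (1:ℝ) < Real.log x := lt_of_lt_of_le one_lt_exp_one e2
      have hllx : (1:ℝ) < Real.log (Real.log x) := lt_of_lt_of_le one_lt_exp_one e3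
      have habs : |x| = x := abs_of_pos (by linarith)
      rw [Gf, if_pos (by rw [habs]; linarith), habs, Lc2_eq hx1]
      apply ENNReal.ofReal_le_ofReal
      have hphi : 2 * Real.log x ≤ phic x := by
        rw [phic_eq hx1]
        have t1 : 0 ≤ Real.log (Real.log x) *
            Real.sin (Real.log (Real.log (Real.log x))) ^ 2 :=
          mul_nonneg (by linarith) (sq_nonneg _)
        nlinarith
      have hgoal_eq : 2⁻¹ * (1 / (x * Real.log x * Real.log (Real.log x)))
          = 1 / (x * (2 * Real.log x) * Real.log (Real.log x)) := by
        field_simp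
      rw [hgoal_eq]
      apply one_div_le_one_div_of_le (by positivity)
      have h9 := mul_le_mul_of_nonneg_left hphi (le_of_lt (show (0:ℝ) < x by linarith))
      exact mul_le_mul_of_nonneg_right h9 (by linarith)
    calc ∫⁻ x in Ioc (psi (c - δ)) (psi (c + δ)), ENNReal.ofReal (Gf x)
        ≤ ∫⁻ x in Ioc (psi (c - δ)) (psi (c + δ)),
            ENNReal.ofReal (2⁻¹ * (1 / (x * Real.log x * Real.log (Real.log x)))) := h1
      _ = ENNReal.ofReal 2⁻¹ * ∫⁻ x in Ioc (psi (c - δ)) (psi (c + δ)),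
            ENNReal.ofReal (1 / (x * Real.log x * Real.log (Real.log x))) := by
          simp only [ENNReal.ofReal_mul (by norm_num : (0:ℝ) ≤ 2⁻¹)]
          rw [lintegral_const_mul _ p_meas]
      _ = ENNReal.ofReal 2⁻¹ * ENNReal.ofReal ((c + δ) - (c - δ)) := by
          rw [intK hca (by linarith)]
      _ = ENNReal.ofReal δ := by
          rw [← ENNReal.ofReal_mul (by norm_num : (0:ℝ) ≤ 2⁻¹)]
          congr 1; ring
  set A : ℝ := Real.exp (c - π/2) with hA
  have hApos : 0 < A := exp_pos _
  set coef : ℝ := π^2 / (8 * A * δ^2) with hcoef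
  clear_value A coef
  have h8Aδ : (0:ℝ) < 8 * A * δ^2 :=
    mul_pos (mul_pos (by norm_num) hApos) (pow_pos hδpos 2)
  have hcoefpos : 0 < coef := hcoef ▸ div_pos (pow_pos Real.pi_pos 2) h8Aδ
  have hS1pt : ∀ x ∈ Ioc (psi (c - π/2)) (psi (c + π/2)) \ Ioc (psi (c - δ)) (psi (c + δ)),
      ENNReal.ofReal (Gf x) ≤
      ENNReal.ofReal (coef * (1 / (x * Real.log x * Real.log (Real.log x)))) := by
    intro x hx
    obtain ⟨hxI, hxS⟩ := hx
    have hx1 : psi 1 ≤ x := le_trans ((psi_mono.le_iff_le).2 hc2) hxI.1.le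
    obtain ⟨e1, e2, e3⟩ := exp_le_of_psi le_rfl hx1
    have hx0 : (1:ℝ) < x := lt_of_lt_of_le one_lt_exp_one e1
    have hlx : (1:ℝ) < Real.log x := lt_of_lt_of_le one_lt_exp_one e2
    have hllx : (1:ℝ) < Real.log (Real.log x) := lt_of_lt_of_le one_lt_exp_one e3
    set t : ℝ := Real.log (Real.log (Real.log x)) with hT
    have hpt : psi t = x := psi_eq_of_lll hx1
    have ht1 : c - π/2 < t := psi_mono.lt_iff_lt.1 (by rw [hpt]; exact hxI.1)
    have ht2 : t ≤ c + π/2 := psi_mono.le_iff_le.1 (by rw [hpt]; exact hxI.2)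
    have htS : δ ≤ |t - c| := by
      rw [Set.mem_Ioc, not_and_or] at hxS
      rcases hxS with h | h
      · push_neg at h
        have : t ≤ c - δ := psi_mono.le_iff_le.1 (by rw [hpt]; exact h)
        rw [abs_sub_comm, abs_of_nonneg (by linarith)]; linarith
      · push_neg at h
        have : c + δ < t := psi_mono.lt_iff_lt.1 (by rw [hpt]; exact h)
        rw [abs_of_nonneg (by linarith)]; linarith
    have habs2 : |t - c| ≤ π/2 := abs_le.2 ⟨by linarith, by linarith⟩
    have hsin_eq : Real.sin t ^ 2 = Real.sin (t - c) ^ 2 := by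
      have h := Real.sin_add_nat_mul_pi (t - c) (k + 1)
      have ht : t - c + ((k + 1 : ℕ) : ℝ) * π = t := by push_cast [hc]; ring
      have h' : Real.sin t = (-1:ℝ)^(k+1) * Real.sin (t - c) := by
        conv_lhs => rw [← ht]
        rw [h]
      have hsq : ((-1:ℝ)^(k+1))^2 = 1 := by
        rw [← pow_mul, mul_comm, pow_mul]; norm_num
      rw [h', mul_pow, hsq, one_mul]
    have hjordan : 2/π * δ ≤ |Real.sin (t - c)| :=
      le_trans (mul_le_mul_of_nonneg_left htS (by positivity)) (Real.mul_abs_le_abs_sin habs2)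
    have hsin2 : (2/π)^2 * δ^2 ≤ Real.sin t ^ 2 := by
      rw [hsin_eq, ← sq_abs (Real.sin (t - c))]
      calc (2/π)^2 * δ^2 = (2/π * δ)^2 := by ring
        _ ≤ |Real.sin (t - c)|^2 :=
            pow_le_pow_left₀ (mul_nonneg (by positivity) hδpos.le) hjordan 2
    have hll : A ≤ Real.log (Real.log x) := by
      have hlleq : Real.log (Real.log x) = Real.exp t := by rw [← hpt, loglog_psi]
      rw [hlleq, hA]; exact exp_le_exp.2 (by linarith)
    have habs : |x| = x := abs_of_pos (by linarith)
    rw [Gf, if_pos (by rw [habs]; linarith), habs, Lc2_eq hx1]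
    apply ENNReal.ofReal_le_ofReal
    have hphi2 : 2 * Real.log x * (A * ((2/π)^2 * δ^2)) ≤ phic x := by
      rw [phic_eq hx1, ← hT]
      have h5 : A * ((2/π)^2 * δ^2) ≤ Real.log (Real.log x) * Real.sin t ^ 2 := by
        have := mul_le_mul hll hsin2 (by positivity) (by linarith)
        linarith
      nlinarith
    have heq : coef * (1 / (x * Real.log x * Real.log (Real.log x)))
        = 1 / (x * (2 * Real.log x * (A * ((2/π)^2 * δ^2))) * Real.log (Real.log x)) := by
      rw [hcoef]
      have hπ0 : π ≠ 0 := Real.pi_ne_zero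
      have hx0' : x ≠ 0 := by linarith
      have hlx' : Real.log x ≠ 0 := by linarith
      have hllx' : Real.log (Real.log x) ≠ 0 := by linarith
      have hA' : A ≠ 0 := hApos.ne'
      have hδ' : δ ≠ 0 := hδpos.ne'
      field_simp
      ring
    rw [heq]
    apply one_div_le_one_div_of_le
    · have h0 : (0:ℝ) < 2 * Real.log x * (A * ((2/π)^2 * δ^2)) :=
        mul_pos (mul_pos two_pos (by linarith))
          (mul_pos hApos (mul_pos (by positivity) (pow_pos hδpos 2)))
      exact mul_pos (mul_pos (by linarith) h0) (by linarith)
    · have h6 := mul_le_mul_of_nonneg_left hphi2 (show (0:ℝ) ≤ x by linarith)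
      have h7 := mul_le_mul_of_nonneg_right h6 (show (0:ℝ) ≤ Real.log (Real.log x) by linarith)
      linarith
  have hS1 : ∫⁻ x in Ioc (psi (c - π/2)) (psi (c + π/2)) \ Ioc (psi (c - δ)) (psi (c + δ)),
      ENNReal.ofReal (Gf x) ≤ ENNReal.ofReal coef * ENNReal.ofReal π := by
    calc ∫⁻ x in Ioc (psi (c - π/2)) (psi (c + π/2)) \ Ioc (psi (c - δ)) (psi (c + δ)),
        ENNReal.ofReal (Gf x)
        ≤ ∫⁻ x in Ioc (psi (c - π/2)) (psi (c + π/2)) \ Ioc (psi (c - δ)) (psi (c + δ)),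
            ENNReal.ofReal
            (coef * (1 / (x * Real.log x * Real.log (Real.log x)))) :=
          setLIntegral_mono' (measurableSet_Ioc.diff measurableSet_Ioc) hS1pt
      _ = ENNReal.ofReal coef *
          ∫⁻ x in Ioc (psi (c - π/2)) (psi (c + π/2)) \ Ioc (psi (c - δ)) (psi (c + δ)),
            ENNReal.ofReal (1 / (x * Real.log x * Real.log (Real.log x))) := by
          simp only [ENNReal.ofReal_mul hcoefpos.le]
          rw [lintegral_const_mul _ p_meas]
      _ ≤ ENNReal.ofReal coef *
          ∫⁻ x in Ioc (psi (c - π/2)) (psi (c + π/2)),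
            ENNReal.ofReal (1 / (x * Real.log x * Real.log (Real.log x))) :=
          mul_le_mul_right (lintegral_mono_set diff_subset) _
      _ = ENNReal.ofReal coef * ENNReal.ofReal ((c + π/2) - (c - π/2)) := by
          rw [intK hc2 (by linarith)]
      _ = ENNReal.ofReal coef * ENNReal.ofReal π := by congr 1; ring
  calc ∫⁻ x in Ioc (psi (c - π/2)) (psi (c + π/2)), ENNReal.ofReal (Gf x)
      ≤ _ + _ := hsplit
    _ ≤ ENNReal.ofReal coef * ENNReal.ofReal π + ENNReal.ofReal δ := add_le_add hS1 hSbound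
    _ = ENNReal.ofReal (coef * π + δ) := by
        rw [← ENNReal.ofReal_mul hcoefpos.le, ← ENNReal.ofReal_add (by positivity) hδpos.le]
    _ ≤ ENNReal.ofReal ((π^3/8 + 1) * Real.exp (-(π/3)) ^ k) := by
        apply ENNReal.ofReal_le_ofReal
        have hAδ : A * δ^2 = Real.exp ((c - π/2)/3) := by
          rw [hA, hδ, sq, ← Real.exp_add, ← Real.exp_add]
          ring_nf
        have hδE : δ = (Real.exp ((c - π/2)/3))⁻¹ := by
          rw [hδ, ← Real.exp_neg]
          congr 1; ring
        have hpow : Real.exp (-(π/3)) ^ k = Real.exp ((k:ℝ) * (-(π/3))) :=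
          (Real.exp_nat_mul _ k).symm
        have hmono : (Real.exp ((c - π/2)/3))⁻¹ ≤ Real.exp ((k:ℝ) * (-(π/3))) := by
          rw [← Real.exp_neg]
          apply Real.exp_le_exp.2
          rw [hc]; nlinarith
        have hEpos : (0:ℝ) < Real.exp ((c - π/2)/3) := exp_pos _
        have hcoefE : coef * π = π^3/8 * (Real.exp ((c - π/2)/3))⁻¹ := by
          rw [hcoef, show (8:ℝ) * A * δ^2 = 8 * (A * δ^2) by ring, hAδ]
          field_simp
        rw [hpow, hcoefE, hδE]
        have hkey := mul_le_mul_of_nonneg_left hmono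
          (show (0:ℝ) ≤ π^3/8 + 1 by positivity)
        nlinarith [hkey, hEpos]

lemma cover : Ici (1:ℝ) ⊆ Icc 1 (psi (π/2)) ∪
    ⋃ k : ℕ, Ioc (psi (((k:ℝ)+1)*π - π/2)) (psi (((k:ℝ)+1)*π + π/2)) := by
  intro x hx
  by_cases h : x ≤ psi (π/2)
  · exact Or.inl ⟨hx, h⟩
  · right
    push_neg at h
    have hπ := Real.pi_gt_three
    have hx1 : psi 1 ≤ x :=
      le_trans ((psi_mono.le_iff_le).2 (by linarith : (1:ℝ) ≤ π/2)) h.le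
    have hpt : psi (Real.log (Real.log (Real.log x))) = x := psi_eq_of_lll hx1
    set t : ℝ := Real.log (Real.log (Real.log x)) with hT
    have ht : π/2 < t := psi_mono.lt_iff_lt.1 (by rw [hpt]; exact h)
    have hπ0 : (0:ℝ) < π := by linarith
    set n : ℕ := ⌈(t - π/2)/π⌉₊ with hn
    have hpos : 0 < (t - π/2)/π := div_pos (by linarith) hπ0
    have hn1 : 1 ≤ n := Nat.one_le_iff_ne_zero.2 (by
      intro h0
      have := Nat.ceil_eq_zero.1 h0
      linarith)
    have hub : (t - π/2)/π ≤ (n:ℝ) := Nat.le_ceil _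
    have hlb : (n:ℝ) < (t - π/2)/π + 1 := Nat.ceil_lt_add_one hpos.le
    refine mem_iUnion.2 ⟨n - 1, ?_⟩
    have hcast : ((n - 1 : ℕ) : ℝ) + 1 = (n:ℝ) := by
      push_cast [Nat.cast_sub hn1]; ring
    have h1 : t ≤ (n:ℝ) * π + π/2 := by
      have := (div_le_iff₀ hπ0).1 hub
      linarith
    have h2 : (n:ℝ) * π - π/2 < t := by
      have h3 : ((n:ℝ) - 1) * π < t - π/2 :=
        (lt_div_iff₀ hπ0).1 (by linarith : (n:ℝ) - 1 < (t - π/2)/π)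
      nlinarith
    constructor
    · rw [← hpt]
      apply psi_mono
      rw [hcast]; linarith
    · rw [← hpt]
      exact (psi_mono.le_iff_le).2 (by rw [hcast]; linarith)

lemma Gf_le_half {x : ℝ} (hx : 1 ≤ x) : Gf x ≤ 2⁻¹ := by
  have habs : |x| = x := abs_of_pos (by linarith)
  rw [Gf, if_pos (by rw [habs]; linarith), habs]
  have h1 := two_le_phic x
  have h2 := one_le_Lc (Lc x)
  have hden : (2:ℝ) ≤ x * phic x * Lc (Lc x) := by
    have hp0 : (0:ℝ) < phic x := by linarith
    have s1 : (2:ℝ) ≤ x * phic x := le_trans h1 (le_mul_of_one_le_left hp0.le hx)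
    exact le_trans s1 (le_mul_of_one_le_right (by nlinarith) h2)
  calc 1 / (x * phic x * Lc (Lc x)) ≤ 1 / 2 := one_div_le_one_div_of_le (by norm_num) hden
    _ = 2⁻¹ := one_div 2

lemma pos_side : ∫⁻ x in Ici (1:ℝ), ENNReal.ofReal (Gf x) < ⊤ := by
  have hmono := lintegral_mono_set (μ := volume) (f := fun x => ENNReal.ofReal (Gf x)) cover
  refine lt_of_le_of_lt (hmono.trans (lintegral_union_le _ _ _)) (ENNReal.add_lt_top.2 ⟨?_, ?_⟩)
  · -- Icc part
    have hb : ∫⁻ x in Icc (1:ℝ) (psi (π/2)), ENNReal.ofReal (Gf x)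
        ≤ ∫⁻ _ in Icc (1:ℝ) (psi (π/2)), (ENNReal.ofReal 2⁻¹) :=
      setLIntegral_mono' measurableSet_Icc fun x hx =>
        ENNReal.ofReal_le_ofReal (Gf_le_half hx.1)
    refine lt_of_le_of_lt hb ?_
    rw [setLIntegral_const]
    rw [Real.volume_Icc]
    exact ENNReal.mul_lt_top ENNReal.ofReal_lt_top ENNReal.ofReal_lt_top
  · -- series part
    refine lt_of_le_of_lt (lintegral_iUnion_le _ _) ?_
    have hr1 : Real.exp (-(π/3)) < 1 := by
      rw [Real.exp_lt_one_iff]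
      have := Real.pi_gt_three; linarith
    have hsum : Summable fun k : ℕ => (π^3/8 + 1) * Real.exp (-(π/3)) ^ k :=
      (summable_geometric_of_lt_one (exp_pos _).le hr1).mul_left _
    calc ∑' k : ℕ, ∫⁻ x in Ioc (psi (((k:ℝ)+1)*π - π/2)) (psi (((k:ℝ)+1)*π + π/2)),
          ENNReal.ofReal (Gf x)
        ≤ ∑' k : ℕ, ENNReal.ofReal ((π^3/8 + 1) * Real.exp (-(π/3)) ^ k) :=
          ENNReal.tsum_le_tsum interval_bound
      _ = ENNReal.ofReal (∑' k : ℕ, (π^3/8 + 1) * Real.exp (-(π/3)) ^ k) :=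
          (ENNReal.ofReal_tsum_of_nonneg (fun k => by positivity) hsum).symm
      _ < ⊤ := ENNReal.ofReal_lt_top

lemma Gf_neg (x : ℝ) : Gf (-x) = Gf x := by rw [Gf, Gf, abs_neg]

lemma neg_side : ∫⁻ x in Iic (-1:ℝ), ENNReal.ofReal (Gf x)
    = ∫⁻ x in Ici (1:ℝ), ENNReal.ofReal (Gf x) := by
  have hmp : MeasurePreserving (fun x : ℝ => -x) volume volume :=
    Measure.measurePreserving_neg _
  have hemb : MeasurableEmbedding (fun x : ℝ => -x) :=
    (Homeomorph.neg ℝ).measurableEmbedding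
  have h := hmp.setLIntegral_comp_preimage_emb hemb
    (fun x => ENNReal.ofReal (Gf x)) (Iic (-1))
  have hpre : (fun x : ℝ => -x) ⁻¹' Iic (-1) = Ici 1 := by
    ext y; simp [Set.mem_Iic, Set.mem_Ici]
  rw [hpre] at h
  rw [← h]
  apply lintegral_congr fun x => by rw [Gf_neg]

lemma whole : ∫⁻ x, ENNReal.ofReal (Gf x) < ⊤ := by
  have hcong : ∀ x : ℝ, ENNReal.ofReal (Gf x)
      = (Iic (-1) ∪ Ici 1).indicator (fun x => ENNReal.ofReal (Gf x)) x := by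
    intro x
    by_cases h : x ∈ Iic (-1:ℝ) ∪ Ici (1:ℝ)
    · rw [Set.indicator_of_mem h]
    · rw [Set.indicator_of_notMem h]
      have : ¬ (1 ≤ |x|) := by
        simp only [Set.mem_union, Set.mem_Iic, Set.mem_Ici, not_or, not_le] at h
        rw [not_le, abs_lt]
        exact ⟨by linarith [h.1], h.2⟩
      rw [Gf, if_neg this, ENNReal.ofReal_zero]
  rw [lintegral_congr hcong,
    lintegral_indicator ((measurableSet_Iic).union measurableSet_Ici)]
  refine lt_of_le_of_lt (lintegral_union_le _ _ _) (ENNReal.add_lt_top.2 ⟨?_, pos_side⟩)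
  rw [neg_side]; exact pos_side

theorem stmt_15 {Ω : Type*} [MeasureSpace Ω] [IsProbabilityMeasure (ℙ : Measure Ω)]
    (X : Ω → ℝ) (hX : Measurable X)
    (hdens : Measure.map X ℙ =
      volume.withDensity (fun x => ENNReal.ofReal (if 1 ≤ |x| then |x| ^ (-3 : ℝ) else 0)))
    (L : ℝ → ℝ) (hL : ∀ x, L x = Real.log (max (Real.exp 1) x))
    (LL LLL : ℝ → ℝ) (hLL : ∀ x, LL x = L (L x)) (hLLL : ∀ x, LLL x = L (LL x))
    (φ₂ : ℝ → ℝ)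
    (hφ₂ : ∀ x, φ₂ x = 2 * L x * (1 + LL x * Real.sin (LLL x) ^ 2)) :
    (∫⁻ ω, ENNReal.ofReal ((X ω) ^ 2 / (φ₂ |X ω| * LL |X ω|))) < ⊤ := by
  have hLf : L = Lc := funext fun x => by rw [hL x]; rfl
  subst hLf
  have hLLf : LL = fun x => Lc (Lc x) := funext hLL
  subst hLLf
  have hLLLf : LLL = fun x => Lc (Lc (Lc x)) := funext hLLL
  subst hLLLf
  have hφf : φ₂ = phic := funext fun x => by rw [hφ₂ x]; rfl
  subst hφf
  set g : ℝ → ℝ := fun x => x ^ 2 / (phic |x| * Lc (Lc |x|)) with hg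
  have hgmeas : Measurable fun x : ℝ => ENNReal.ofReal (g x) := by
    apply Measurable.ennreal_ofReal
    exact ((continuous_pow 2).measurable).div
      (((phic_cont.comp continuous_abs).mul
        (Lc_cont.comp (Lc_cont.comp continuous_abs))).measurable)
  have hfmeas : Measurable fun x : ℝ =>
      ENNReal.ofReal (if 1 ≤ |x| then |x| ^ (-3 : ℝ) else 0) := by
    apply Measurable.ennreal_ofReal
    apply Measurable.ite (measurableSet_le measurable_const measurable_abs)
    · exact measurable_abs.pow_const (-3 : ℝ) |>.comp measurable_id |>.mono le_rfl le_rfl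
    · exact measurable_const
  have hpt : ∀ x : ℝ,
      ENNReal.ofReal (if 1 ≤ |x| then |x| ^ (-3 : ℝ) else 0) * ENNReal.ofReal (g x)
        ≤ ENNReal.ofReal (Gf x) := by
    intro x
    have hfnn : 0 ≤ if 1 ≤ |x| then |x| ^ (-3 : ℝ) else 0 := by
      split
      · positivity
      · exact le_refl 0
    rw [← ENNReal.ofReal_mul hfnn]
    apply ENNReal.ofReal_le_ofReal
    by_cases h : 1 ≤ |x|
    · rw [if_pos h, Gf, if_pos h]
      simp only [hg]
      have hx0 : (0:ℝ) < |x| := lt_of_lt_of_le one_pos h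
      have hD : (0:ℝ) < phic |x| * Lc (Lc |x|) :=
        mul_pos (phic_pos _) (lt_of_lt_of_le one_pos (one_le_Lc _))
      have hrpow : |x| ^ (-3:ℝ) = (|x|^(3:ℕ))⁻¹ := by
        rw [Real.rpow_neg (abs_nonneg x), show ((3:ℝ)) = ((3:ℕ):ℝ) by norm_num,
          Real.rpow_natCast]
      have hx2 : x ^ 2 = |x| ^ 2 := (sq_abs x).symm
      rw [hrpow, hx2]
      apply le_of_eq
      have h1 : phic |x| * Lc (Lc |x|) ≠ 0 := hD.ne'
      have h3 : |x| ≠ 0 := hx0.ne'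
      generalize hP : phic |x| * Lc (Lc |x|) = P at *
      generalize ha : |x| = a at *
      rw [mul_assoc, hP]
      field_simp
    · rw [if_neg h, zero_mul, Gf, if_neg h]
  calc ∫⁻ ω, ENNReal.ofReal ((X ω) ^ 2 / (phic |X ω| * Lc (Lc |X ω|)))
      = ∫⁻ x, ENNReal.ofReal (g x) ∂(Measure.map X ℙ) := (lintegral_map hgmeas hX).symm
    _ = ∫⁻ x, ENNReal.ofReal (if 1 ≤ |x| then |x| ^ (-3 : ℝ) else 0)
          * ENNReal.ofReal (g x) ∂volume := by
        rw [hdens, lintegral_withDensity_eq_lintegral_mul volume hfmeas hgmeas]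
        simp only [Pi.mul_apply]
    _ ≤ ∫⁻ x, ENNReal.ofReal (Gf x) := lintegral_mono hpt
    _ < ⊤ := whole
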